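/- Let A be a Banach algebra, X a Banach A-bimodule, and suppose for each x'' in X** the map F ↦ x''·F from A** to X** is weak*-to-weak continuous. If D : A → X* is a derivation, then D''(A**)·X** ⊆ A*: for every F in A** and x'' in X**, the functional G ↦ <D''(F), x''·G> on A** is represented by an element of A*. -/

import Mathlib

open NormedSpace ContinuousLinearMap Filter

noncomputable section

/-- `NormedSpace.Dual` (removed from Mathlib, replaced by `StrongDual`), restored as a type
synonym of `E →L[𝕜] 𝕜` carrying the operator-norm structure. -/
def NormedSpace.Dual (𝕜 : Type*) (E : Type*) [NontriviallyNormedField 𝕜]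
    [NormedAddCommGroup E] [NormedSpace 𝕜 E] : Type _ := E →L[𝕜] 𝕜

instance NormedSpace.Dual.instNormedAddCommGroup (𝕜 : Type*) (E : Type*)
    [NontriviallyNormedField 𝕜] [NormedAddCommGroup E] [NormedSpace 𝕜 E] :
    NormedAddCommGroup (NormedSpace.Dual 𝕜 E) := ContinuousLinearMap.toNormedAddCommGroup

instance NormedSpace.Dual.instNormedSpace (𝕜 : Type*) (E : Type*)
    [NontriviallyNormedField 𝕜] [NormedAddCommGroup E] [NormedSpace 𝕜 E] :
    NormedSpace 𝕜 (NormedSpace.Dual 𝕜 E) := ContinuousLinearMap.toNormedSpace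

instance NormedSpace.Dual.instFunLike (𝕜 : Type*) (E : Type*)
    [NontriviallyNormedField 𝕜] [NormedAddCommGroup E] [NormedSpace 𝕜 E] :
    FunLike (NormedSpace.Dual 𝕜 E) E 𝕜 := ContinuousLinearMap.funLike

instance NormedSpace.Dual.instContinuousLinearMapClass (𝕜 : Type*) (E : Type*)
    [NontriviallyNormedField 𝕜] [NormedAddCommGroup E] [NormedSpace 𝕜 E] :
    ContinuousLinearMapClass (NormedSpace.Dual 𝕜 E) 𝕜 E 𝕜 :=
  ContinuousLinearMap.continuousSemilinearMapClass

/-- The adjoint (dual map) of a continuous linear map: `dMap T φ = φ ∘ T`. -/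
def dMap {E F : Type*} [NormedAddCommGroup E] [NormedSpace ℝ E]
    [NormedAddCommGroup F] [NormedSpace ℝ F] (T : E →L[ℝ] F) :
    Dual ℝ F →L[ℝ] Dual ℝ E :=
  (ContinuousLinearMap.compL ℝ E F ℝ).flip T

/-- The double adjoint of a continuous linear map. -/
def ddMap {E F : Type*} [NormedAddCommGroup E] [NormedSpace ℝ E]
    [NormedAddCommGroup F] [NormedSpace ℝ F] (T : E →L[ℝ] F) :
    Dual ℝ (Dual ℝ E) →L[ℝ] Dual ℝ (Dual ℝ F) :=
  dMap (dMap T)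

/-- The (first, left) Arens extension of a bounded bilinear map `m : E × F → G` to the
biduals, via the classical three steps:
`⟨g'·e, f⟩ = ⟨g', m e f⟩`, `⟨Ψ·g', e⟩ = ⟨Ψ, g'·e⟩`, `⟨arensExt m Φ Ψ, g'⟩ = ⟨Φ, Ψ·g'⟩`. -/
def arensExt {E F G : Type*} [NormedAddCommGroup E] [NormedSpace ℝ E]
    [NormedAddCommGroup F] [NormedSpace ℝ F] [NormedAddCommGroup G] [NormedSpace ℝ G]
    (m : E →L[ℝ] F →L[ℝ] G) :
    Dual ℝ (Dual ℝ E) →L[ℝ] Dual ℝ (Dual ℝ F) →L[ℝ] Dual ℝ (Dual ℝ G) :=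
  let s1 : E →L[ℝ] (Dual ℝ G →L[ℝ] Dual ℝ F) :=
    ((ContinuousLinearMap.compL ℝ F G ℝ).flip).comp m
  let s2 : Dual ℝ G →L[ℝ] (Dual ℝ (Dual ℝ F) →L[ℝ] Dual ℝ E) :=
    ((ContinuousLinearMap.compL ℝ E (Dual ℝ F) ℝ).flip).comp s1.flip
  (((ContinuousLinearMap.compL ℝ (Dual ℝ G) (Dual ℝ E) ℝ).flip).comp s2.flip).flip

/-- The first Arens product on the bidual of a (possibly non-unital) Banach algebra:
`⟨F G, a'⟩ = ⟨F, G·a'⟩` where `⟨G·a', a⟩ = ⟨G, a'·a⟩` and `⟨a'·a, b⟩ = ⟨a', a*b⟩`. -/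
def arens1 (A : Type*) [NonUnitalNormedRing A] [NormedSpace ℝ A]
    [IsScalarTower ℝ A A] [SMulCommClass ℝ A A] :
    Dual ℝ (Dual ℝ A) →L[ℝ] Dual ℝ (Dual ℝ A) →L[ℝ] Dual ℝ (Dual ℝ A) :=
  arensExt (ContinuousLinearMap.mul ℝ A)

/-- The second Arens product on the bidual of a (possibly non-unital) Banach algebra:
`⟨F ∘ G, a'⟩ = ⟨G, a'∘F⟩` where `⟨a'∘F, a⟩ = ⟨F, a∘a'⟩` and `⟨a∘a', b⟩ = ⟨a', b*a⟩`. -/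
def arens2 (A : Type*) [NonUnitalNormedRing A] [NormedSpace ℝ A]
    [IsScalarTower ℝ A A] [SMulCommClass ℝ A A] :
    Dual ℝ (Dual ℝ A) →L[ℝ] Dual ℝ (Dual ℝ A) →L[ℝ] Dual ℝ (Dual ℝ A) :=
  (arensExt ((ContinuousLinearMap.mul ℝ A).flip)).flip

/-- `f`, a map from a dual space to a normed space, is weak-star-to-weak continuous. -/
def WstarToWeakContinuous {E F : Type*} [NormedAddCommGroup E] [NormedSpace ℝ E]
    [NormedAddCommGroup F] [NormedSpace ℝ F]
    (f : Dual ℝ E → F) : Prop :=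
  Continuous fun x : WeakDual ℝ E => toWeakSpace ℝ F (f x)
variable {A : Type*} [NonUnitalNormedRing A] [NormedSpace ℝ A]
  [IsScalarTower ℝ A A] [SMulCommClass ℝ A A] [CompleteSpace A]
variable {X : Type*} [NormedAddCommGroup X] [NormedSpace ℝ X] [CompleteSpace X]

/-- If for each `x'' ∈ X**` the map `F ↦ x''·F` is weak-star-to-weak continuous and
`D : A → X*` is a derivation, then `D''(A**) · X** ⊆ A*`: each functional
`G ↦ ⟨D''(F), x''·G⟩` on `A**` is represented by an element of `A*`. -/
theorem bidual_derivation_range_cond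
    -- `l` is the left action, `r a x = x · a` is the right action of the bimodule `X`
    (l r : A →L[ℝ] X →L[ℝ] X)
    (hl : ∀ a b : A, l (a * b) = (l a).comp (l b))
    (hr : ∀ a b : A, r (a * b) = (r b).comp (r a))
    (hc : ∀ a b : A, (l a).comp (r b) = (r b).comp (l a))
    (hw : ∀ x'' : Dual ℝ (Dual ℝ X),
      WstarToWeakContinuous fun F : Dual ℝ (Dual ℝ A) => arensExt r.flip x'' F)
    (D : A →L[ℝ] Dual ℝ X)
    (hD : ∀ a b : A, D (a * b) = dMap (r a) (D b) + dMap (l b) (D a))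
    (F : Dual ℝ (Dual ℝ A)) (x'' : Dual ℝ (Dual ℝ X)) :
    ∃ a' : Dual ℝ A, ∀ G : Dual ℝ (Dual ℝ A),
      ddMap D F (arensExt r.flip x'' G) = G a' := by
  classical
  -- The functional `T : G ↦ ⟨D''F, x''·G⟩` on `A**`.
  set T : Dual ℝ (Dual ℝ A) →L[ℝ] ℝ := (ddMap D F).comp (arensExt r.flip x'') with hT
  -- `T` is weak-star continuous: `G ↦ x''·G` is weak-star-to-weak continuous by `hw`,
  -- and the bounded functional `D''F` is weakly continuous.
  have hcont : Continuous fun G : WeakDual ℝ (Dual ℝ A) => T G := by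
    have h1 := hw x''
    have h2 : Continuous fun z : WeakSpace ℝ (Dual ℝ (Dual ℝ X)) =>
        (topDualPairing ℝ (Dual ℝ (Dual ℝ X))).flip z (ddMap D F) :=
      WeakBilin.eval_continuous _ _
    exact h2.comp h1
  -- The weak-star topology is generated by the seminorms `G ↦ ‖G a'‖`.
  set B := topDualPairing ℝ (Dual ℝ A) with hB
  have hsem := B.weakBilin_withSeminorms
  have hqc : @Continuous (WeakDual ℝ (Dual ℝ A)) ℝ _ _
      ⇑(LinearMap.toSeminorm T.toLinearMap) := by
    rw [LinearMap.coe_toSeminorm]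
    exact hcont.norm
  obtain ⟨s, C, hC, hbound⟩ := Seminorm.bound_of_continuous hsem _ hqc
  -- Hence `T` vanishes on the common kernel of the evaluations at elements of `s`.
  have hker : ⨅ i : s, LinearMap.ker (B.flip (i : Dual ℝ A)) ≤
      LinearMap.ker (T.toLinearMap) := by
    intro G hG
    simp only [Submodule.mem_iInf, LinearMap.mem_ker] at hG ⊢
    have h0 : (s.sup B.toSeminormFamily) G = 0 := by
      refine le_antisymm (Seminorm.finset_sup_apply_le le_rfl fun i hi => ?_)
        (apply_nonneg _ _)
      have hBi : B G i = 0 := hG ⟨i, hi⟩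
      simp [LinearMap.toSeminormFamily_apply, hBi]
    have h1 : (T.toLinearMap).toSeminorm G ≤ (C • s.sup B.toSeminormFamily) G :=
      hbound G
    have h2 : (C • s.sup B.toSeminormFamily) G = 0 := by
      rw [Seminorm.smul_apply, h0, smul_zero]
    rw [h2] at h1
    exact norm_le_zero_iff.1 (show ‖T G‖ ≤ 0 from h1)
  -- Therefore `T` is a finite linear combination of these evaluations.
  have hmem := mem_span_of_iInf_ker_le_ker
    (L := fun i : s => B.flip (i : Dual ℝ A)) hker
  obtain ⟨c, hc⟩ := (Submodule.mem_span_range_iff_exists_fun ℝ).1 hmem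
  refine ⟨∑ i : s, c i • (i : Dual ℝ A), fun G => ?_⟩
  have hG : T G = ∑ i : s, c i • G (i : Dual ℝ A) := by
    have := LinearMap.congr_fun hc G
    erw [LinearMap.sum_apply] at this
    simp only [LinearMap.smul_apply, LinearMap.flip_apply, hB, topDualPairing_apply,
      smul_eq_mul, ContinuousLinearMap.coe_coe] at this
    exact this.symm
  calc ddMap D F (arensExt r.flip x'' G) = T G := rfl
    _ = ∑ i : s, c i • G (i : Dual ℝ A) := hG
    _ = G (∑ i : s, c i • (i : Dual ℝ A)) := by
        rw [map_sum]
        simp [smul_eq_mul]
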